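/- arXiv:1811.04642 — 3 statements merged into one kernel-verified Lean document; each statement's English description precedes it below -/
import Mathlib

section
/- Let Π be an abstract pattern space over X and Ξ ⊆ Π a subset that admits a supremum ⋁Ξ with respect to the order ≥ (where P ≥ Q iff P ∧ supp Q = Q). Then supp(⋁Ξ) equals the closure of ⋃_{P∈Ξ} supp P. -/
open Metric Set Pointwise

/-- An abstract pattern space over a (proper) metric space `X`: a set `A` with a
cutting-off operation by closed subsets of `X`, such that cutting twice equals cutting
by the intersection, and each element has a (unique) closed support `supp p` with
`cut p C = p ↔ supp p ⊆ C` for closed `C`. -/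
structure PatternSpace (X : Type*) [MetricSpace X] (A : Type*) where
  cut : A → Set X → A
  supp : A → Set X
  supp_closed : ∀ p : A, IsClosed (supp p)
  cut_cut : ∀ (p : A) (C₁ C₂ : Set X), IsClosed C₁ → IsClosed C₂ →
    cut (cut p C₁) C₂ = cut p (C₁ ∩ C₂)
  cut_eq_self_iff : ∀ (p : A) (C : Set X), IsClosed C → (cut p C = p ↔ supp p ⊆ C)

namespace PatternSpace

variable {X A : Type*} [MetricSpace X]

/-- `S.ge p q` means `p ≥ q`, i.e. `p ∧ supp q = q`. -/
def ge (S : PatternSpace X A) (p q : A) : Prop := S.cut p (S.supp q) = q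

/-- `p` is the supremum of `Ξ ⊆ A` with respect to the order `ge`. -/
def IsSupOf (S : PatternSpace X A) (Ξ : Set A) (p : A) : Prop :=
  (∀ q ∈ Ξ, S.ge p q) ∧ ∀ r : A, (∀ q ∈ Ξ, S.ge r q) → S.ge r p

/-- Two abstract patterns are compatible if some element dominates both. -/
def Compatible (S : PatternSpace X A) (p q : A) : Prop := ∃ r : A, S.ge r p ∧ S.ge r q

def PairwiseCompatible (S : PatternSpace X A) (Ξ : Set A) : Prop :=
  ∀ p ∈ Ξ, ∀ q ∈ Ξ, S.Compatible p q

/-- `Ξ` is locally finite: cutting by any closed ball yields finitely many patterns. -/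
def LocFin (S : PatternSpace X A) (Ξ : Set A) : Prop :=
  ∀ (x : X) (r : ℝ), 0 < r → ((fun p => S.cut p (Metric.closedBall x r)) '' Ξ).Finite

/-- `S` is glueable: every locally finite pairwise compatible subset has a supremum,
and cutting commutes with this supremum. -/
def Glueable (S : PatternSpace X A) : Prop :=
  ∀ Ξ : Set A, S.LocFin Ξ → S.PairwiseCompatible Ξ →
    ∃ p : A, S.IsSupOf Ξ p ∧
      ∀ C : Set X, IsClosed C → S.IsSupOf ((fun q => S.cut q C) '' Ξ) (S.cut p C)

end PatternSpace

/-- Lemma 2.19: if `Ξ ⊆ Π` admits a supremum `⋁Ξ` (w.r.t. the order `ge`), then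
`supp (⋁Ξ) = closure (⋃_{P ∈ Ξ} supp P)`. -/
theorem stmt4 {X A : Type*} [MetricSpace X] [ProperSpace X] [Nonempty A]
    (S : PatternSpace X A) (Ξ : Set A) (P : A) (h : S.IsSupOf Ξ P) :
    S.supp P = closure (⋃ Q ∈ Ξ, S.supp Q) := by
  have key : ∀ (p : A) (C : Set X), IsClosed C → S.supp (S.cut p C) ⊆ S.supp p ∩ C := by
    intro p C hC
    have h1 : S.cut p (S.supp p) = p :=
      (S.cut_eq_self_iff p (S.supp p) (S.supp_closed p)).2 subset_rfl
    have h2 : S.cut p C = S.cut p (S.supp p ∩ C) := by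
      conv_lhs => rw [← h1]
      exact S.cut_cut p (S.supp p) C (S.supp_closed p) hC
    have h3 : S.cut (S.cut p C) (S.supp p ∩ C) = S.cut p C := by
      rw [S.cut_cut p C (S.supp p ∩ C) hC ((S.supp_closed p).inter hC)]
      rw [h2]
      congr 1
      ext x; constructor
      · rintro ⟨hx1, hx2, _⟩; exact ⟨hx2, hx1⟩
      · rintro ⟨hx1, hx2⟩; exact ⟨hx2, hx1, hx2⟩
    exact (S.cut_eq_self_iff (S.cut p C) (S.supp p ∩ C)
      ((S.supp_closed p).inter hC)).1 h3
  set D := closure (⋃ Q ∈ Ξ, S.supp Q) with hD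
  have hDclosed : IsClosed D := isClosed_closure
  have hsub : ∀ Q ∈ Ξ, S.supp Q ⊆ D := fun Q hQ =>
    (subset_iUnion₂ (s := fun Q _ => S.supp Q) Q hQ).trans subset_closure
  apply Subset.antisymm
  · -- supp P ⊆ D
    set r := S.cut P D with hr
    have hge : ∀ q ∈ Ξ, S.ge r q := by
      intro q hq
      have : S.cut r (S.supp q) = S.cut P (D ∩ S.supp q) :=
        S.cut_cut P D (S.supp q) hDclosed (S.supp_closed q)
      rw [PatternSpace.ge, this, inter_eq_self_of_subset_right (hsub q hq)]
      exact h.1 q hq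
    have hrP : S.cut r (S.supp P) = P := h.2 r hge
    have hsr : S.supp r ⊆ S.supp P := (key P D hDclosed).trans inter_subset_left
    have : S.cut r (S.supp P) = r :=
      (S.cut_eq_self_iff r (S.supp P) (S.supp_closed P)).2 hsr
    have hPr : P = r := by rw [← hrP, this]
    rw [hPr]
    exact (key P D hDclosed).trans inter_subset_right
  · -- D ⊆ supp P
    rw [hD, (S.supp_closed P).closure_subset_iff]
    refine iUnion₂_subset fun Q hQ => ?_
    have := key P (S.supp Q) (S.supp_closed Q)
    rw [h.1 Q hQ] at this
    exact this.trans inter_subset_left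
end

section
/- On the abstract pattern space Map(ℝ, ℂ, 0) of all functions ℝ → ℂ, with ℝ acting on itself by translations and trivially on ℂ, the local matching topology is not Hausdorff: the characteristic functions 1_ℚ and 1_{ℚ+a}, for any irrational a, form a pair belonging to every entourage U_{K,V}. -/
open scoped Classical

/-- The cutting-off operation of `Map(ℝ, ℂ, 0)`: `(f ∧ C)(x) = f x` if `x ∈ C`
and `= 0` otherwise. -/
noncomputable def cutFn (f : ℝ → ℂ) (C : Set ℝ) : ℝ → ℂ :=
  fun x => if x ∈ C then f x else 0

/-- The translation action of `ℝ` on `Map(ℝ, ℂ, 0)`: `(γ f)(x) = f (x - γ)`. -/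
def translFn (γ : ℝ) (f : ℝ → ℂ) : ℝ → ℂ := fun x => f (x - γ)

/-- The characteristic function `1_ℚ` of the rationals. -/
noncomputable def indQ : ℝ → ℂ := fun x => if ∃ q : ℚ, (q : ℝ) = x then 1 else 0

/-- The characteristic function `1_{ℚ + a}`. -/
noncomputable def indQa (a : ℝ) : ℝ → ℂ := fun x => if ∃ q : ℚ, (q : ℝ) + a = x then 1 else 0

/-- Lemma 3.9: on `Map(ℝ, ℂ, 0)` (with `ℝ` acting by translations and trivially on
`ℂ`), the local matching topology is not Hausdorff: for any irrational `a`, the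
distinct characteristic functions `1_ℚ` and `1_{ℚ+a}` form a pair belonging to every
entourage `U_{K,V}` (for `K ⊆ ℝ` compact and `V` a compact neighborhood of `0`). -/
theorem stmt13 (a : ℝ) (ha : Irrational a) :
    indQ ≠ indQa a ∧
    ∀ (K V : Set ℝ), IsCompact K → IsCompact V → V ∈ nhds (0 : ℝ) →
      ∃ γ ∈ V, cutFn indQ K = cutFn (translFn γ (indQa a)) K := by
  constructor
  · intro h
    have h0 := congrFun h 0
    simp only [indQ, indQa] at h0
    rw [if_pos ⟨0, by norm_num⟩] at h0
    have : ¬ ∃ q : ℚ, (q : ℝ) + a = 0 := by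
      rintro ⟨q, hq⟩
      exact (ha.ne_rat (-q)) (by push_cast; linarith)
    rw [if_neg this] at h0
    exact one_ne_zero h0
  · intro K V _ _ hV
    obtain ⟨ε, hε, hball⟩ := Metric.mem_nhds_iff.mp hV
    obtain ⟨r, hr⟩ := exists_rat_near a hε
    refine ⟨(r : ℝ) - a, hball (by simpa [Real.dist_eq, abs_sub_comm] using hr), ?_⟩
    have key : ∀ x : ℝ, indQ x = indQa a (x - ((r : ℝ) - a)) := by
      intro x
      simp only [indQ, indQa]
      congr 1
      rw [eq_iff_iff]
      constructor
      · rintro ⟨q, rfl⟩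
        exact ⟨q - r, by push_cast; ring⟩
      · rintro ⟨q, hq⟩
        exact ⟨q + r, by push_cast; linarith⟩
    funext x
    simp only [cutFn, translFn]
    split
    · exact key x
    · rfl
end

section
/- Let I be a nonempty set. On the product Γ-abstract pattern space ∏_{i∈I} C(X), where C(X) is the space of closed subsets of X with intersection as cutting-off operation and the Γ-action inherited from the action on X, the local matching topology is Hausdorff: if D = (D_i)_i and E = (E_i)_i satisfy (D,E) ∈ U_{K,V} for every compact K ⊆ X and every compact neighborhood V of e ∈ Γ, then D = E. -/
open Pointwise

/-- Lemma 3.12: on the product `∏_{i ∈ I} C(X)` of copies of the space of closed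
subsets of `X` (with intersection as cutting-off operation and the `Γ`-action inherited
from the action on `X`), the local matching topology is Hausdorff: if
`(D, E) ∈ U_{K,V}` for every compact `K ⊆ X` and every compact neighborhood `V` of the
identity of `Γ` — i.e. there is `γ ∈ V` with `D_i ∩ K = (γ E_i) ∩ K` for all `i` —
then `D = E`. -/
theorem stmt16 {X Γ I : Type*} [MetricSpace X] [ProperSpace X] [Nonempty I]
    [MetricSpace Γ] [ProperSpace Γ] [Group Γ] [IsTopologicalGroup Γ] [IsIsometricSMul Γ Γ]
    [MulAction Γ X] [IsIsometricSMul Γ X] [ContinuousSMul Γ X]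
    (D E : I → Set X) (hD : ∀ i, IsClosed (D i)) (hE : ∀ i, IsClosed (E i))
    (h : ∀ (K : Set X) (V : Set Γ), IsCompact K → IsCompact V → V ∈ nhds (1 : Γ) →
      ∃ γ ∈ V, ∀ i : I, D i ∩ K = (γ • E i) ∩ K) :
    D = E := by
  funext i
  ext x
  constructor
  · -- x ∈ D i → x ∈ E i
    intro hx
    rw [← (hE i).closure_eq, Metric.mem_closure_iff]
    intro ε hε
    have hc : ContinuousAt (fun γ : Γ => γ⁻¹ • x) 1 :=
      ((continuous_inv.smul continuous_const).continuousAt)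
    have h1 : (fun γ : Γ => γ⁻¹ • x) 1 = x := by simp
    rw [Metric.continuousAt_iff] at hc
    obtain ⟨δ, hδ, hδ'⟩ := hc ε hε
    obtain ⟨γ, hγV, hγ⟩ := h (Metric.closedBall x 1) (Metric.closedBall 1 (δ / 2))
      (isCompact_closedBall _ _) (isCompact_closedBall _ _)
      (Metric.closedBall_mem_nhds _ (by linarith))
    have hxK : x ∈ D i ∩ Metric.closedBall x 1 := ⟨hx, Metric.mem_closedBall_self (by norm_num)⟩
    rw [hγ i] at hxK
    have hmem : γ⁻¹ • x ∈ E i := by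
      have := hxK.1
      rwa [Set.mem_smul_set_iff_inv_smul_mem] at this
    refine ⟨γ⁻¹ • x, hmem, ?_⟩
    have : dist γ (1 : Γ) < δ := lt_of_le_of_lt (Metric.mem_closedBall.mp hγV) (by linarith)
    have := hδ' this
    rw [dist_comm]
    simpa using this
  · -- x ∈ E i → x ∈ D i
    intro hx
    rw [← (hD i).closure_eq, Metric.mem_closure_iff]
    intro ε hε
    have hc : ContinuousAt (fun γ : Γ => γ • x) 1 :=
      ((continuous_id.smul continuous_const).continuousAt)
    have h1 : (fun γ : Γ => γ • x) 1 = x := by simp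
    rw [Metric.continuousAt_iff] at hc
    obtain ⟨δ, hδ, hδ'⟩ := hc ε hε
    obtain ⟨γ, hγV, hγ⟩ := h (Metric.closedBall x ε) (Metric.closedBall 1 (δ / 2))
      (isCompact_closedBall _ _) (isCompact_closedBall _ _)
      (Metric.closedBall_mem_nhds _ (by linarith))
    have hdist : dist (γ • x) x < ε := by
      have : dist γ (1 : Γ) < δ := lt_of_le_of_lt (Metric.mem_closedBall.mp hγV) (by linarith)
      have := hδ' this
      simpa using this
    have hmem : γ • x ∈ (γ • E i) ∩ Metric.closedBall x ε :=
      ⟨Set.smul_mem_smul_set hx, Metric.mem_closedBall.mpr hdist.le⟩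
    rw [← hγ i] at hmem
    exact ⟨γ • x, hmem.1, by rwa [dist_comm]⟩
end
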